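/- Let λ₁, λ₂, μ₁, μ₂, θ_s > 0, γ_s = λ₁/(λ₁+λ₂). Define s_i = ((μ₁ + μ₂·[i>1] + (i-1)θ_s)·(1-γ_s))/(μ₂ + i·θ_s) and f(m) = ∏_{i=1}^{m} s_i with f(0) = 1. Then for all m ≥ 1, ∑_{k=1}^{m} f(m-k)·μ₁·(1-γ_s)^k = f(m)·(μ₂ + m·θ_s). -/

import Mathlib

theorem stmt_5 (l1 l2 m1 m2 θ : ℝ) (hl1 : 0 < l1) (hl2 : 0 < l2) (hm1 : 0 < m1)
    (hm2 : 0 < m2) (hθ : 0 < θ) (γ : ℝ) (hγ : γ = l1 / (l1 + l2))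
    (f : ℕ → ℝ)
    (hf : ∀ m : ℕ, f m = ∏ i ∈ Finset.Icc 1 m,
      ((m1 + (if 1 < i then m2 else 0) + ((i : ℝ) - 1) * θ) * (1 - γ)) /
        (m2 + (i : ℝ) * θ)) :
    ∀ m : ℕ, 1 ≤ m →
      ∑ k ∈ Finset.Icc 1 m, f (m - k) * m1 * (1 - γ) ^ k =
        f m * (m2 + (m : ℝ) * θ) := by
  have hden : ∀ i : ℕ, m2 + (i : ℝ) * θ ≠ 0 := by
    intro i
    have : (0:ℝ) ≤ (i : ℝ) * θ := by positivity
    nlinarith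
  intro m hm
  induction m with
  | zero => omega
  | succ n ih =>
    rcases Nat.lt_or_ge n 1 with h | hn
    · have hn0 : n = 0 := by omega
      subst hn0
      have hf0 : f 0 = 1 := by simp [hf]
      have hf1 : f 1 = (m1 * (1 - γ)) / (m2 + θ) := by
        rw [hf]
        norm_num
      rw [show Finset.Icc 1 1 = {1} by rfl, Finset.sum_singleton, hf1, hf0]
      push_cast
      field_simp
    · have ihn := ih hn
      have fstep : f (n + 1) = f n *
          (((m1 + m2 + (n : ℝ) * θ) * (1 - γ)) / (m2 + ((n:ℝ) + 1) * θ)) := by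
        rw [hf (n+1), hf n, Finset.prod_Icc_succ_top (by omega : 1 ≤ n + 1)]
        have : (1:ℕ) < n + 1 := by omega
        rw [if_pos this]
        push_cast
        norm_num
      have hL : (∑ k ∈ Finset.Icc 1 (n+1), f (n + 1 - k) * m1 * (1 - γ) ^ k)
          = (1 - γ) * (∑ k ∈ Finset.Icc 1 n, f (n - k) * m1 * (1 - γ) ^ k) +
            f n * m1 * (1 - γ) := by
        rw [← Finset.Ico_add_one_right_eq_Icc, ← Finset.Ico_add_one_right_eq_Icc (b := n), Finset.sum_Ico_eq_sum_range, Finset.sum_Ico_eq_sum_range]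
        simp only [Nat.add_sub_cancel, Nat.succ_sub_one]
        rw [Finset.sum_range_succ']
        rw [Finset.mul_sum]
        congr 1
        · apply Finset.sum_congr rfl
          intro j hj
          have : n + 1 - (1 + (j + 1)) = n - (1 + j) := by omega
          rw [this]
          ring
        · simp
      rw [hL, ihn, fstep]
      have h1 : m2 + ((n:ℝ) + 1) * θ ≠ 0 := by
        have := hden (n + 1); push_cast at this; linarith [mul_pos (by positivity : (0:ℝ) < ((n:ℝ)+1)) hθ]
      push_cast
      field_simp
      ring
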